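/- arXiv:1201.4469 — 3 statements merged into one kernel-verified Lean document; each statement's English description precedes it below -/
import Mathlib

section
/- Let δ be a metric on M. Then the following are equivalent: (i) for every measure ν ∈ M with Fourier coefficients c_k = c_k(ν), k = 0,1,2,…, and every sequence of positive reals ε_n → 0, the diameter ρ_δ(F_{c_{0:n},ε_n}) tends to 0 as n → ∞; (ii) δ is weakly continuous. -/
open MeasureTheory Complex Filter Topology
open scoped ENNReal

noncomputable section

instance : Fact (0 < 2 * Real.pi) := ⟨by positivity⟩

/-- The unit circle `𝕋`, identified with `(−π,π]`, formalized as `ℝ / 2πℤ`. -/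
abbrev UnitCirc : Type := AddCircle (2 * Real.pi)

/-- `M`: the space of finite nonnegative Borel measures on `𝕋`, equipped with
the topology of weak convergence. -/
abbrev MSp : Type := MeasureTheory.FiniteMeasure UnitCirc

/-- The `k`-th Fourier coefficient (covariance) `c_k(μ) = (1/2π) ∫ e^{−ikθ} dμ(θ)`. -/
def covCoeff (μ : MSp) (k : ℕ) : ℂ :=
  ((2 * Real.pi : ℝ) : ℂ)⁻¹ * ∫ θ, fourier (-(k : ℤ)) θ ∂(μ : Measure UnitCirc)

-- integrability of continuous complex maps
lemma integrable_cm (f : C(UnitCirc, ℂ)) (μ : MSp) :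
    Integrable (fun θ => f θ) (μ : Measure UnitCirc) :=
  (BoundedContinuousFunction.mkOfCompact f).integrable _

-- continuity of complex integral in the measure
lemma continuous_integral_cm (f : C(UnitCirc, ℂ)) :
    Continuous fun μ : MSp => ∫ θ, f θ ∂(μ : Measure UnitCirc) := by
  have hre := FiniteMeasure.continuous_integral_boundedContinuousFunction
      (BoundedContinuousFunction.mkOfCompact ⟨fun θ => (f θ).re, Complex.continuous_re.comp f.continuous⟩)
  have him := FiniteMeasure.continuous_integral_boundedContinuousFunction
      (BoundedContinuousFunction.mkOfCompact ⟨fun θ => (f θ).im, Complex.continuous_im.comp f.continuous⟩)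
  have key : ∀ μ : MSp, ∫ θ, f θ ∂(μ : Measure UnitCirc)
      = ((∫ θ, (f θ).re ∂(μ : Measure UnitCirc) : ℝ) : ℂ)
        + ((∫ θ, (f θ).im ∂(μ : Measure UnitCirc) : ℝ) : ℂ) * Complex.I := by
    intro μ
    have := integral_re_add_im (integrable_cm f μ)
    simpa using this.symm
  have : (fun μ : MSp => ∫ θ, f θ ∂(μ : Measure UnitCirc))
      = fun μ : MSp => ((∫ θ, (f θ).re ∂(μ : Measure UnitCirc) : ℝ) : ℂ)
        + ((∫ θ, (f θ).im ∂(μ : Measure UnitCirc) : ℝ) : ℂ) * Complex.I := funext key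
  rw [this]
  exact ((Complex.continuous_ofReal.comp hre).add
    ((Complex.continuous_ofReal.comp him).mul continuous_const))

lemma continuous_covCoeff (k : ℕ) : Continuous fun μ : MSp => covCoeff μ k :=
  continuous_const.mul (continuous_integral_cm (fourier (-(k : ℤ))))

lemma integral_fourier_eq (μ : MSp) (k : ℕ) :
    ∫ θ, fourier (-(k : ℤ)) θ ∂(μ : Measure UnitCirc) = ((2 * Real.pi : ℝ) : ℂ) * covCoeff μ k := by
  rw [covCoeff]
  have h : ((2 * Real.pi : ℝ) : ℂ) ≠ 0 := by
    simp [Complex.ofReal_ne_zero]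
  rw [← mul_assoc, mul_inv_cancel₀ h, one_mul]

-- Lemma A: convergence of Fourier coefficients implies weak convergence
lemma tendsto_of_covCoeff (ν : MSp) (μs : ℕ → MSp)
    (h : ∀ k : ℕ, Tendsto (fun j => covCoeff (μs j) k) atTop (𝓝 (covCoeff ν k))) :
    Tendsto μs atTop (𝓝 ν) := by
  -- Step 1: integrals of fourier characters converge
  have hint : ∀ m : ℤ, Tendsto (fun j => ∫ θ, fourier m θ ∂(μs j : Measure UnitCirc))
      atTop (𝓝 (∫ θ, fourier m θ ∂(ν : Measure UnitCirc))) := by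
    intro m
    rcases le_or_gt m 0 with hm | hm
    · have hm' : m = -(m.natAbs : ℤ) := by omega
      rw [hm']
      simp only [integral_fourier_eq]
      exact ((h m.natAbs).const_mul _)
    · have hm' : (-m).natAbs = m.natAbs := by omega
      have key : ∀ μ : MSp, ∫ θ, fourier m θ ∂(μ : Measure UnitCirc)
          = starRingEnd ℂ (∫ θ, fourier (-m) θ ∂(μ : Measure UnitCirc)) := by
        intro μ
        rw [← integral_conj]
        congr 1
        ext θ
        rw [fourier_neg]
        simp
      simp only [key]
      have base : Tendsto (fun j => ∫ θ, fourier (-m) θ ∂(μs j : Measure UnitCirc))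
          atTop (𝓝 (∫ θ, fourier (-m) θ ∂(ν : Measure UnitCirc))) := by
        have hmm : -m = -((m.natAbs : ℕ) : ℤ) := by omega
        rw [hmm]
        simp only [integral_fourier_eq]
        exact ((h m.natAbs).const_mul _)
      exact (Complex.continuous_conj.tendsto _).comp base
  -- Step 2: span of fourier characters
  have hspan : ∀ p : C(UnitCirc, ℂ), p ∈ Submodule.span ℂ (Set.range (@fourier (2 * Real.pi))) →
      Tendsto (fun j => ∫ θ, p θ ∂(μs j : Measure UnitCirc))
        atTop (𝓝 (∫ θ, p θ ∂(ν : Measure UnitCirc))) := by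
    intro p hp
    induction hp using Submodule.span_induction with
    | mem x hx =>
        obtain ⟨m, rfl⟩ := hx
        exact hint m
    | zero => simpa using tendsto_const_nhds
    | add x y hx hy ihx ihy =>
        have hx' : ∀ μ : MSp, ∫ θ, (x + y) θ ∂(μ : Measure UnitCirc)
            = (∫ θ, x θ ∂(μ : Measure UnitCirc)) + ∫ θ, y θ ∂(μ : Measure UnitCirc) := by
          intro μ
          simp only [ContinuousMap.add_apply]
          exact integral_add (integrable_cm x μ) (integrable_cm y μ)
        simp only [hx']
        exact ihx.add ihy
    | smul a x hx ihx =>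
        have hx' : ∀ μ : MSp, ∫ θ, (a • x) θ ∂(μ : Measure UnitCirc)
            = a • ∫ θ, x θ ∂(μ : Measure UnitCirc) := by
          intro μ
          simp only [ContinuousMap.smul_apply]
          exact integral_smul a _
        simp only [hx']
        exact ihx.const_smul a
  -- Step 3: mass bound
  have hmass : Tendsto (fun j => ((μs j : Measure UnitCirc) Set.univ).toReal)
      atTop (𝓝 (((ν : Measure UnitCirc) Set.univ).toReal)) := by
    have h0 := hint 0
    simp only [fourier_zero, integral_const, smul_eq_mul, mul_one] at h0
    have := (Complex.continuous_re.tendsto _).comp h0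
    have e : ∀ μ : MSp, ((μ : Measure UnitCirc) Set.univ).toReal = (μ.mass : ℝ) := fun μ => by
      rw [← FiniteMeasure.ennreal_mass, ENNReal.coe_toReal]
    simp only [e]
    simpa [Function.comp_def] using this
  obtain ⟨M, hM⟩ := hmass.bddAbove_range
  have hMb : ∀ j, ((μs j : Measure UnitCirc) Set.univ).toReal ≤ M := fun j =>
    hM (Set.mem_range_self j)
  set mν : ℝ := ((ν : Measure UnitCirc) Set.univ).toReal with hmν
  have hmν0 : 0 ≤ mν := ENNReal.toReal_nonneg
  set B : ℝ := M + mν + 1 with hB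
  have hM0 : 0 ≤ M := le_trans ENNReal.toReal_nonneg (hMb 0)
  have hB0 : 0 < B := by positivity
  -- Step 4: all continuous complex functions
  have main : ∀ f : C(UnitCirc, ℂ), Tendsto (fun j => ∫ θ, f θ ∂(μs j : Measure UnitCirc))
      atTop (𝓝 (∫ θ, f θ ∂(ν : Measure UnitCirc))) := by
    intro f
    rw [Metric.tendsto_atTop]
    intro η hη
    have hf : f ∈ closure ((Submodule.span ℂ (Set.range (@fourier (2 * Real.pi)))) : Set C(UnitCirc, ℂ)) := by
      have := span_fourier_closure_eq_top (T := 2 * Real.pi)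
      rw [← Submodule.topologicalClosure_coe, this]
      trivial
    obtain ⟨p, hpmem, hpdist⟩ := Metric.mem_closure_iff.mp hf (η / (3 * B)) (by positivity)
    obtain ⟨N, hN⟩ := (Metric.tendsto_atTop.mp (hspan p hpmem)) (η / 3) (by positivity)
    refine ⟨N, fun j hj => ?_⟩
    have hnormbound : ∀ μ : MSp, ‖(∫ θ, f θ ∂(μ : Measure UnitCirc)) - ∫ θ, p θ ∂(μ : Measure UnitCirc)‖
        ≤ dist f p * ((μ : Measure UnitCirc) Set.univ).toReal := by
      intro μ
      rw [← integral_sub (integrable_cm f μ) (integrable_cm p μ)]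
      refine norm_integral_le_of_norm_le_const ?_
      filter_upwards with θ
      calc ‖f θ - p θ‖ = dist (f θ) (p θ) := (dist_eq_norm _ _).symm
        _ ≤ dist f p := ContinuousMap.dist_apply_le_dist θ
    have hdB : dist f p * B < η / 3 := by
      have h' := mul_lt_mul_of_pos_right hpdist hB0
      have : η / (3 * B) * B = η / 3 := by field_simp
      linarith
    have h1 : dist (∫ θ, f θ ∂(μs j : Measure UnitCirc)) (∫ θ, p θ ∂(μs j : Measure UnitCirc)) < η / 3 := by
      rw [dist_eq_norm]
      have b1 : ‖(∫ θ, f θ ∂(μs j : Measure UnitCirc)) - ∫ θ, p θ ∂(μs j : Measure UnitCirc)‖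
          ≤ dist f p * M := le_trans (hnormbound (μs j))
            (mul_le_mul_of_nonneg_left (hMb j) dist_nonneg)
      have b2 : dist f p * M ≤ dist f p * B := by
        refine mul_le_mul_of_nonneg_left ?_ dist_nonneg
        simp only [hB]; linarith
      exact lt_of_le_of_lt b1 (lt_of_le_of_lt b2 hdB)
    have h3 : dist (∫ θ, p θ ∂(ν : Measure UnitCirc)) (∫ θ, f θ ∂(ν : Measure UnitCirc)) < η / 3 := by
      rw [dist_comm, dist_eq_norm]
      have b1 : ‖(∫ θ, f θ ∂(ν : Measure UnitCirc)) - ∫ θ, p θ ∂(ν : Measure UnitCirc)‖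
          ≤ dist f p * mν := hnormbound ν
      have b2 : dist f p * mν ≤ dist f p * B := by
        refine mul_le_mul_of_nonneg_left ?_ dist_nonneg
        simp only [hB]; linarith
      exact lt_of_le_of_lt b1 (lt_of_le_of_lt b2 hdB)
    have h2 := hN j hj
    calc dist (∫ θ, f θ ∂(μs j : Measure UnitCirc)) (∫ θ, f θ ∂(ν : Measure UnitCirc))
        ≤ dist (∫ θ, f θ ∂(μs j : Measure UnitCirc)) (∫ θ, p θ ∂(μs j : Measure UnitCirc))
          + dist (∫ θ, p θ ∂(μs j : Measure UnitCirc)) (∫ θ, f θ ∂(ν : Measure UnitCirc)) :=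
            dist_triangle _ _ _
      _ ≤ dist (∫ θ, f θ ∂(μs j : Measure UnitCirc)) (∫ θ, p θ ∂(μs j : Measure UnitCirc))
          + (dist (∫ θ, p θ ∂(μs j : Measure UnitCirc)) (∫ θ, p θ ∂(ν : Measure UnitCirc))
            + dist (∫ θ, p θ ∂(ν : Measure UnitCirc)) (∫ θ, f θ ∂(ν : Measure UnitCirc))) := by
            gcongr; exact dist_triangle _ _ _
      _ < η / 3 + (η / 3 + η / 3) := by gcongr
      _ = η := by ring
  -- Step 5: conclude
  rw [FiniteMeasure.tendsto_iff_forall_integral_tendsto]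
  intro g
  have := main ⟨fun θ => ((g θ : ℝ) : ℂ), Complex.continuous_ofReal.comp g.continuous⟩
  simp only [ContinuousMap.coe_mk] at this
  have hre := (Complex.continuous_re.tendsto _).comp this
  have heq : ∀ μ : MSp, (∫ θ, ((g θ : ℝ) : ℂ) ∂(μ : Measure UnitCirc)).re
      = ∫ θ, g θ ∂(μ : Measure UnitCirc) := by
    intro μ
    have hInt : Integrable (fun θ => ((g θ : ℝ) : ℂ)) (μ : Measure UnitCirc) :=
      integrable_cm ⟨fun θ => ((g θ : ℝ) : ℂ), Complex.continuous_ofReal.comp g.continuous⟩ μ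
    have h2 := integral_re hInt
    simpa using h2.symm
  simpa only [Function.comp_def, heq] using hre

/-- The uncertainty set `F_{c_{0:n}, ε}`. -/
def FsetEps (n : ℕ) (c : ℕ → ℂ) (ε : ℝ) : Set MSp :=
  {μ | ∀ k ≤ n, ‖c k - covCoeff μ k‖ < ε}

/-- The diameter `ρ_δ(F)` of a set of measures, valued in `[0,∞]`. -/
def diamE (δ : MSp → MSp → ℝ) (F : Set MSp) : ℝ≥0∞ :=
  ⨆ μ0 ∈ F, ⨆ μ1 ∈ F, ENNReal.ofReal (δ μ0 μ1)

/-- For a metric `δ` on `M`, the diameter of the uncertainty sets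
`F_{c_{0:n},ε_n}` tends to `0` (for every `ν ∈ M` and every positive `ε_n → 0`)
iff `δ` is weakly continuous. -/
theorem stmt0 (δ : MSp → MSp → ℝ)
    (hm₀ : ∀ μ0 μ1 : MSp, δ μ0 μ1 = 0 ↔ μ0 = μ1)
    (hm₁ : ∀ μ0 μ1 : MSp, δ μ0 μ1 = δ μ1 μ0)
    (hm₂ : ∀ μ0 μ1 μ2 : MSp, δ μ0 μ2 ≤ δ μ0 μ1 + δ μ1 μ2) :
    (∀ ν : MSp, ∀ ε : ℕ → ℝ, (∀ n, 0 < ε n) → Tendsto ε atTop (nhds 0) →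
        Tendsto (fun n => diamE δ (FsetEps n (covCoeff ν) (ε n))) atTop (nhds 0)) ↔
      Continuous (fun p : MSp × MSp => δ p.1 p.2) := by
  constructor
  · -- diameters shrink ⇒ weak continuity
    intro H
    have key : ∀ (μ : MSp) (η : ℝ), 0 < η →
        ∃ U : Set MSp, IsOpen U ∧ μ ∈ U ∧ ∀ ρ ∈ U, δ ρ μ < η := by
      intro μ η hη
      have hεpos : ∀ n : ℕ, (0:ℝ) < 1 / ((n:ℝ) + 1) := fun n => by positivity
      have hε0 : Tendsto (fun n : ℕ => 1 / ((n:ℝ) + 1)) atTop (𝓝 0) :=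
        tendsto_one_div_add_atTop_nhds_zero_nat
      have hdiam := H μ _ hεpos hε0
      have hev := hdiam.eventually_lt_const
        (show (0:ℝ≥0∞) < ENNReal.ofReal η by simpa using hη)
      obtain ⟨N, hN⟩ := hev.exists
      refine ⟨FsetEps N (covCoeff μ) (1 / ((N:ℝ) + 1)), ?_, ?_, ?_⟩
      · have hEq : FsetEps N (covCoeff μ) (1 / ((N:ℝ) + 1))
            = ⋂ k ∈ Finset.Iic N,
              {ρ : MSp | ‖covCoeff μ k - covCoeff ρ k‖ < 1 / ((N:ℝ) + 1)} := by
          ext ρ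
          simp [FsetEps]
        rw [hEq]
        refine isOpen_biInter_finset fun k _ => ?_
        exact isOpen_lt (continuous_norm.comp
          (continuous_const.sub (continuous_covCoeff k))) continuous_const
      · intro k _
        simpa using hεpos N
      · intro ρ hρ
        have hμmem : μ ∈ FsetEps N (covCoeff μ) (1 / ((N:ℝ) + 1)) := by
          intro k _
          simpa using hεpos N
        have hle : ENNReal.ofReal (δ ρ μ)
            ≤ diamE δ (FsetEps N (covCoeff μ) (1 / ((N:ℝ) + 1))) := by
          rw [diamE]
          exact le_iSup₂_of_le ρ hρ (le_iSup₂_of_le μ hμmem le_rfl)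
        have := lt_of_le_of_lt hle hN
        exact (ENNReal.ofReal_lt_ofReal_iff hη).mp this
    rw [continuous_iff_continuousAt]
    rintro ⟨μ, μ'⟩
    rw [ContinuousAt, Metric.tendsto_nhds]
    intro η hη
    obtain ⟨U, hUo, hUm, hU⟩ := key μ (η / 2) (by positivity)
    obtain ⟨U', hU'o, hU'm, hU'⟩ := key μ' (η / 2) (by positivity)
    have hmemn : U ×ˢ U' ∈ 𝓝 (μ, μ') :=
      prod_mem_nhds (hUo.mem_nhds hUm) (hU'o.mem_nhds hU'm)
    filter_upwards [hmemn] with p hp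
    obtain ⟨hp1, hp2⟩ := hp
    have d1 : δ p.1 μ < η / 2 := hU _ hp1
    have d2 : δ p.2 μ' < η / 2 := hU' _ hp2
    rw [Real.dist_eq, abs_sub_lt_iff]
    constructor
    · have t1 : δ p.1 p.2 ≤ δ p.1 μ + δ μ p.2 := hm₂ _ _ _
      have t2 : δ μ p.2 ≤ δ μ μ' + δ μ' p.2 := hm₂ _ _ _
      have t3 : δ μ' p.2 = δ p.2 μ' := hm₁ _ _
      linarith
    · have t1 : δ μ μ' ≤ δ μ p.1 + δ p.1 μ' := hm₂ _ _ _
      have t2 : δ p.1 μ' ≤ δ p.1 p.2 + δ p.2 μ' := hm₂ _ _ _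
      have t3 : δ μ p.1 = δ p.1 μ := hm₁ _ _
      linarith
  · -- weak continuity ⇒ diameters shrink
    intro hcont ν ε hεpos hε0
    rw [ENNReal.tendsto_nhds_zero]
    intro η hη
    by_contra hcon
    rw [Filter.not_eventually] at hcon
    have hfreq : ∃ᶠ n in atTop, η < diamE δ (FsetEps n (covCoeff ν) (ε n)) :=
      hcon.mono fun n hn => lt_of_not_ge hn
    set η' : ℝ≥0∞ := min η 1 with hη'
    have hη'0 : 0 < η' := lt_min hη zero_lt_one
    have hη'top : η' ≠ ⊤ := ne_top_of_le_ne_top (by simp) (min_le_right _ _)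
    set r : ℝ := η'.toReal with hr
    have hr0 : 0 < r := ENNReal.toReal_pos hη'0.ne' hη'top
    have hofr : ENNReal.ofReal r = η' := by rw [hr, ENNReal.ofReal_toReal hη'top]
    have hsel : ∀ m : ℕ, ∃ n, m ≤ n ∧
        ∃ μ0 ∈ FsetEps n (covCoeff ν) (ε n), ∃ μ1 ∈ FsetEps n (covCoeff ν) (ε n),
          r < δ μ0 μ1 := by
      intro m
      obtain ⟨n, hnm, hn⟩ := (frequently_atTop.mp hfreq) m
      have hlt : ENNReal.ofReal r < diamE δ (FsetEps n (covCoeff ν) (ε n)) :=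
        lt_of_le_of_lt (hofr.le.trans (min_le_left η 1)) hn
      rw [diamE] at hlt
      simp only [lt_iSup_iff] at hlt
      obtain ⟨μ0, hμ0, μ1, hμ1, hlt'⟩ := hlt
      exact ⟨n, hnm, μ0, hμ0, μ1, hμ1,
        (ENNReal.ofReal_lt_ofReal_iff_of_nonneg hr0.le).mp hlt'⟩
    choose n hn μ0 hμ0 μ1 hμ1 hδr using hsel
    have hnt : Tendsto n atTop atTop := tendsto_atTop_mono hn tendsto_id
    have hεn : Tendsto (fun m => ε (n m)) atTop (𝓝 0) := hε0.comp hnt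
    have hcov : ∀ (μseq : ℕ → MSp),
        (∀ m, μseq m ∈ FsetEps (n m) (covCoeff ν) (ε (n m))) →
        ∀ k : ℕ, Tendsto (fun m => covCoeff (μseq m) k) atTop (𝓝 (covCoeff ν k)) := by
      intro μseq hmem k
      rw [tendsto_iff_dist_tendsto_zero]
      refine squeeze_zero' (Eventually.of_forall fun m => dist_nonneg) ?_ hεn
      filter_upwards [eventually_ge_atTop k] with m hm
      have hb := hmem m k (le_trans hm (hn m))
      calc dist (covCoeff (μseq m) k) (covCoeff ν k)
          = ‖covCoeff ν k - covCoeff (μseq m) k‖ := by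
            rw [dist_comm, Complex.dist_eq]
        _ ≤ ε (n m) := hb.le
    have t0 := tendsto_of_covCoeff ν (fun m => μ0 m) (hcov _ hμ0)
    have t1 := tendsto_of_covCoeff ν (fun m => μ1 m) (hcov _ hμ1)
    have hc : Tendsto (fun m => δ (μ0 m) (μ1 m)) atTop (𝓝 (δ ν ν)) :=
      (hcont.tendsto (ν, ν)).comp (t0.prodMk_nhds t1)
    rw [(hm₀ ν ν).mpr rfl] at hc
    obtain ⟨m, hmlt⟩ := (hc.eventually_lt_const hr0).exists
    exact absurd (hδr m) (not_lt.mpr hmlt.le)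

end
end

section
/- Let c_{0:n} ∈ ℂ^{n+1} with c_0 real be such that its Toeplitz matrix T_n is positive semidefinite and singular, and let ĉ_{0:n}(k) ∈ ℂ^{n+1}, k = 1,2,…, be vectors whose Toeplitz matrices are positive semidefinite and such that ĉ_{0:n}(k) → c_{0:n} as k → ∞. If δ is a weakly continuous metric on M, then ρ_δ(F_{ĉ_{0:n}(k)}) → 0 as k → ∞. -/
open MeasureTheory Complex Filter Topology
open scoped ENNReal ComplexOrder

noncomputable section

/-- The uncertainty set `F_{c_{0:n}}` for `c_{0:n} ∈ ℂ^{n+1}`. -/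
def FsetFin (n : ℕ) (c : Fin (n + 1) → ℂ) : Set MSp :=
  {μ | ∀ k : Fin (n + 1), covCoeff μ (k : ℕ) = c k}

/-- The Hermitian Toeplitz matrix `T_n = [c_{j−k}]_{j,k=0}^n`, with `c_{−k} = conj (c_k)`. -/
def toeplitz (n : ℕ) (c : Fin (n + 1) → ℂ) : Matrix (Fin (n + 1)) (Fin (n + 1)) ℂ :=
  fun j k =>
    if _ : (k : ℕ) ≤ (j : ℕ) then
      c ⟨(j : ℕ) - (k : ℕ), Nat.lt_of_le_of_lt (Nat.sub_le _ _) j.isLt⟩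
    else
      starRingEnd ℂ (c ⟨(k : ℕ) - (j : ℕ), Nat.lt_of_le_of_lt (Nat.sub_le _ _) k.isLt⟩)

lemma cont_integrable {E : Type*} [NormedAddCommGroup E] [NormedSpace ℝ E] [SecondCountableTopology E] [MeasurableSpace E] [BorelSpace E]
    {f : UnitCirc → E} (hf : Continuous f) (μ : Measure UnitCirc) [IsFiniteMeasure μ] :
    Integrable f μ := by
  exact (BoundedContinuousFunction.mkOfCompact ⟨f, hf⟩).integrable μ

lemma fourier_npow (m : ℕ) (θ : UnitCirc) :
    (fourier 1 θ : ℂ) ^ m = fourier (m : ℤ) θ := by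
  induction m with
  | zero => simp [fourier_zero]
  | succ k ih => rw [pow_succ, ih, ← fourier_add]; norm_num [add_comm]

lemma ee_injective : Function.Injective (fun θ : UnitCirc => (fourier 1 θ : ℂ)) := by
  intro x y h
  have := AddCircle.injective_toCircle (T := 2 * Real.pi) (by positivity)
  apply this
  ext
  simpa [fourier_one] using h

lemma integral_fourier_neg (μ : MSp) (k : ℕ) :
    ∫ θ, fourier (-(k : ℤ)) θ ∂(μ : Measure UnitCirc) = (2 * Real.pi : ℝ) * covCoeff μ k := by
  rw [covCoeff]
  have h2 : ((2 * Real.pi : ℝ) : ℂ) ≠ 0 := by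
    norm_cast
    positivity
  field_simp

lemma integral_fourier_pos (μ : MSp) (k : ℕ) :
    ∫ θ, fourier (k : ℤ) θ ∂(μ : Measure UnitCirc)
      = (2 * Real.pi : ℝ) * (starRingEnd ℂ) (covCoeff μ k) := by
  have : ∫ θ, fourier (k : ℤ) θ ∂(μ : Measure UnitCirc)
      = (starRingEnd ℂ) (∫ θ, fourier (-(k : ℤ)) θ ∂(μ : Measure UnitCirc)) := by
    rw [← integral_conj]
    congr 1
    ext θ
    rw [← fourier_neg, neg_neg]
  rw [this, integral_fourier_neg, map_mul]
  congr 1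
  simp [Complex.ext_iff]


/-- evaluation of the polynomial with coefficients `b` at `e^{iθ}`. -/
def Pev (n : ℕ) (b : Fin (n + 1) → ℂ) (θ : UnitCirc) : ℂ :=
  ∑ j : Fin (n + 1), b j * fourier ((j : ℕ) : ℤ) θ

lemma Pev_continuous (n : ℕ) (b : Fin (n + 1) → ℂ) : Continuous (Pev n b) := by
  unfold Pev
  exact continuous_finset_sum _ fun j _ => continuous_const.mul (fourier _).continuous

/-- The Toeplitz quadratic form. -/
def QF (n : ℕ) (b : Fin (n + 1) → ℂ) (c : Fin (n + 1) → ℂ) : ℂ :=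
  dotProduct (star b) ((toeplitz n c).mulVec b)

lemma integral_fourier_toeplitz (μ : MSp) (n : ℕ) (j k : Fin (n + 1)) :
    ∫ θ, fourier (((k : ℕ) : ℤ) - ((j : ℕ) : ℤ)) θ ∂(μ : Measure UnitCirc)
      = (2 * Real.pi : ℝ) * toeplitz n (fun i => covCoeff μ i) j k := by
  by_cases h : (k : ℕ) ≤ (j : ℕ)
  · have hz : (((k : ℕ) : ℤ) - ((j : ℕ) : ℤ)) = -(((j : ℕ) - (k : ℕ) : ℕ) : ℤ) := by omega
    rw [hz, integral_fourier_neg μ ((j : ℕ) - (k : ℕ)), toeplitz, dif_pos h]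
  · have h' : (j : ℕ) ≤ (k : ℕ) := by omega
    have hz : (((k : ℕ) : ℤ) - ((j : ℕ) : ℤ)) = (((k : ℕ) - (j : ℕ) : ℕ) : ℤ) := by omega
    rw [hz, integral_fourier_pos μ ((k : ℕ) - (j : ℕ)), toeplitz, dif_neg h]

lemma qform_eq (μ : MSp) (n : ℕ) (b : Fin (n + 1) → ℂ) :
    ∫ θ, (starRingEnd ℂ) (Pev n b θ) * Pev n b θ ∂(μ : Measure UnitCirc)
      = (2 * Real.pi : ℝ) * QF n b (fun i => covCoeff μ i) := by
  have hint : ∀ m : ℤ, Integrable (fun θ : UnitCirc => (fourier m θ : ℂ)) (μ : Measure UnitCirc) :=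
    fun m => cont_integrable (fourier m).continuous _
  have expand : ∀ θ : UnitCirc, (starRingEnd ℂ) (Pev n b θ) * Pev n b θ
      = ∑ j : Fin (n + 1), ∑ k : Fin (n + 1),
          ((starRingEnd ℂ) (b j) * b k) * fourier (((k : ℕ) : ℤ) - ((j : ℕ) : ℤ)) θ := by
    intro θ
    rw [Pev, map_sum, Finset.sum_mul]
    refine Finset.sum_congr rfl fun j _ => ?_
    rw [Finset.mul_sum]
    refine Finset.sum_congr rfl fun k _ => ?_
    rw [map_mul, ← fourier_neg, sub_eq_add_neg, fourier_add]
    ring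
  rw [MeasureTheory.integral_congr_ae (Filter.Eventually.of_forall expand)]
  rw [MeasureTheory.integral_finset_sum _ (fun j _ => MeasureTheory.integrable_finset_sum _
    (fun k _ => ((hint _).const_mul _)))]
  have key : ∀ j : Fin (n+1), ∫ θ, (∑ k : Fin (n + 1),
      ((starRingEnd ℂ) (b j) * b k) * fourier (((k : ℕ) : ℤ) - ((j : ℕ) : ℤ)) θ)
        ∂(μ : Measure UnitCirc)
      = ∑ k : Fin (n + 1), ((starRingEnd ℂ) (b j) * b k) *
          ((2 * Real.pi : ℝ) * toeplitz n (fun i => covCoeff μ i) j k) := by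
    intro j
    rw [MeasureTheory.integral_finset_sum _ (fun k _ => ((hint _).const_mul _))]
    refine Finset.sum_congr rfl fun k _ => ?_
    rw [integral_const_mul, integral_fourier_toeplitz]
  rw [Finset.sum_congr rfl fun j _ => key j]
  simp only [QF, dotProduct, Matrix.mulVec, Pi.star_apply, RCLike.star_def,
    Finset.mul_sum]
  refine Finset.sum_congr rfl fun j _ => Finset.sum_congr rfl fun k _ => by ring

lemma qform_real (μ : MSp) (n : ℕ) (b : Fin (n + 1) → ℂ) :
    ∫ θ, Complex.normSq (Pev n b θ) ∂(μ : Measure UnitCirc)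
      = ((2 * Real.pi : ℝ) * QF n b (fun i => covCoeff μ i)).re := by
  have h := qform_eq μ n b
  have hi : Integrable (fun θ => (starRingEnd ℂ) (Pev n b θ) * Pev n b θ)
      (μ : Measure UnitCirc) :=
    cont_integrable ((Complex.continuous_conj.comp (Pev_continuous n b)).mul
      (Pev_continuous n b)) _
  have h2 := integral_re hi
  simp only [RCLike.re_to_complex] at h2
  rw [h] at h2
  rw [← h2]
  refine MeasureTheory.integral_congr_ae (Filter.Eventually.of_forall fun θ => ?_)
  simp [Complex.normSq_apply, Complex.mul_re]

lemma mass_eq (μ : MSp) :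
    (((μ : Measure UnitCirc) Set.univ).toReal : ℂ)
      = (2 * Real.pi : ℝ) * (starRingEnd ℂ) (covCoeff μ 0) := by
  have h := integral_fourier_pos μ 0
  have h2 : ∀ θ : UnitCirc, (fourier ((0 : ℕ) : ℤ) θ : ℂ) = 1 := by
    intro θ; norm_num [fourier_zero]
  rw [MeasureTheory.integral_congr_ae (Filter.Eventually.of_forall h2)] at h
  rw [MeasureTheory.integral_const] at h
  rw [← h]
  simp
  rfl

lemma QF_re_nonneg {n : ℕ} {c : Fin (n + 1) → ℂ} (h : (toeplitz n c).PosSemidef)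
    (b : Fin (n + 1) → ℂ) : 0 ≤ (QF n b c).re := by
  have := h.dotProduct_mulVec_nonneg b
  rw [Complex.le_def] at this
  simpa [QF] using this.1

lemma toeplitz_continuous (n : ℕ) (j k : Fin (n + 1)) :
    Continuous fun c : Fin (n + 1) → ℂ => toeplitz n c j k := by
  unfold toeplitz
  by_cases h : (k : ℕ) ≤ (j : ℕ)
  · simp only [dif_pos h]; exact continuous_apply _
  · simp only [dif_neg h]
    exact Complex.continuous_conj.comp (continuous_apply _)

lemma QF_continuous (n : ℕ) (b : Fin (n + 1) → ℂ) :
    Continuous fun c : Fin (n + 1) → ℂ => QF n b c := by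
  simp only [QF, dotProduct, Matrix.mulVec]
  refine continuous_finset_sum _ fun j _ => Continuous.mul continuous_const ?_
  exact continuous_finset_sum _ fun k _ => ((toeplitz_continuous n j k).mul continuous_const)

/-- the polynomial with coefficient vector `b`. -/
def pol (n : ℕ) (b : Fin (n + 1) → ℂ) : Polynomial ℂ :=
  ∑ j : Fin (n + 1), Polynomial.C (b j) * Polynomial.X ^ (j : ℕ)

lemma pol_coeff (n : ℕ) (b : Fin (n + 1) → ℂ) (j : Fin (n + 1)) :
    (pol n b).coeff (j : ℕ) = b j := by
  rw [pol, Polynomial.finset_sum_coeff]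
  rw [Finset.sum_eq_single j]
  · simp
  · intro i _ hij
    rw [Polynomial.coeff_C_mul, Polynomial.coeff_X_pow, if_neg, mul_zero]
    exact fun h => hij (Fin.ext h.symm)
  · simp

lemma pol_natDegree_le (n : ℕ) (b : Fin (n + 1) → ℂ) : (pol n b).natDegree ≤ n := by
  refine (Polynomial.natDegree_sum_le _ _).trans ?_
  rw [Finset.fold_max_le]
  refine ⟨Nat.zero_le _, fun j _ => ?_⟩
  exact (Polynomial.natDegree_C_mul_le _ _).trans (by simp [Fin.is_le j])

lemma eval_eq_Pev (n : ℕ) (Q : Polynomial ℂ) (hQ : Q.natDegree ≤ n) (θ : UnitCirc) :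
    Q.eval (fourier 1 θ) = Pev n (fun j => Q.coeff (j : ℕ)) θ := by
  rw [Polynomial.eval_eq_sum_range' (Nat.lt_succ_of_le hQ), Pev]
  rw [← Fin.sum_univ_eq_sum_range (fun i => Q.coeff i * (fourier 1 θ : ℂ) ^ i)]
  exact Finset.sum_congr rfl fun j _ => by rw [fourier_npow]

lemma pol_eval (n : ℕ) (b : Fin (n + 1) → ℂ) (θ : UnitCirc) :
    (pol n b).eval (fourier 1 θ) = Pev n b θ := by
  rw [eval_eq_Pev n _ (pol_natDegree_le n b)]
  unfold Pev
  exact Finset.sum_congr rfl fun j _ => by simp only []; rw [pol_coeff]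

lemma pol_ne_zero {n : ℕ} {b : Fin (n + 1) → ℂ} (hb : b ≠ 0) : pol n b ≠ 0 := by
  intro h
  apply hb
  funext j
  have := pol_coeff n b j
  rw [h] at this
  simpa using this.symm

lemma smul_dirac_finite (r : ℝ) (x : UnitCirc) :
    IsFiniteMeasure (ENNReal.ofReal r • Measure.dirac x) := by
  constructor
  rw [Measure.smul_apply, smul_eq_mul]
  exact ENNReal.mul_lt_top ENNReal.ofReal_lt_top (by simp)

lemma dirac_sum_finite (Zf : Finset UnitCirc) (w : UnitCirc → ℝ) :
    IsFiniteMeasure (∑ i ∈ Zf, ENNReal.ofReal (w i) • Measure.dirac i) := by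
  constructor
  rw [MeasureTheory.Measure.finset_sum_apply]
  refine ENNReal.sum_lt_top.mpr fun i _ => ?_
  rw [Measure.smul_apply, smul_eq_mul]
  exact ENNReal.mul_lt_top ENNReal.ofReal_lt_top (by simp)

lemma integral_dirac_sum (Zf : Finset UnitCirc) (w : UnitCirc → ℝ) (hw : ∀ i ∈ Zf, 0 ≤ w i)
    (f : UnitCirc → ℝ) (hf : Continuous f) :
    ∫ x, f x ∂(∑ i ∈ Zf, ENNReal.ofReal (w i) • Measure.dirac i) = ∑ i ∈ Zf, w i * f i := by
  rw [MeasureTheory.integral_finset_sum_measure (fun i _ => by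
    have := smul_dirac_finite (w i) i
    exact cont_integrable hf _)]
  refine Finset.sum_congr rfl fun i hi => ?_
  rw [MeasureTheory.integral_smul_measure, MeasureTheory.integral_dirac, smul_eq_mul,
    ENNReal.toReal_ofReal (hw i hi)]

/-- On a compact space, a continuous function vanishing wherever a nonneg continuous `h`
vanishes can be bounded as `|g| ≤ ε + C h`. -/
lemma bound_aux {g h : UnitCirc → ℝ} (hg : Continuous g) (hh : Continuous h)
    (hZ : ∀ θ, h θ = 0 → g θ = 0) (hh0 : ∀ θ, 0 ≤ h θ) {ε : ℝ} (hε : 0 < ε) :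
    ∃ C : ℝ, 0 ≤ C ∧ ∀ θ, |g θ| ≤ ε + C * h θ := by
  set K : Set UnitCirc := {θ | ε ≤ |g θ|} with hK
  have hKc : IsCompact K := (isClosed_le continuous_const hg.abs).isCompact
  rcases K.eq_empty_or_nonempty with hKe | hKne
  · refine ⟨0, le_refl _, fun θ => ?_⟩
    rw [zero_mul, add_zero]
    by_contra hcon
    push_neg at hcon
    exact (Set.eq_empty_iff_forall_notMem.mp hKe θ) (le_of_lt hcon)
  · obtain ⟨θ₀, hθ₀K, hmin⟩ := hKc.exists_isMinOn hKne hh.continuousOn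
    set η := h θ₀ with hη
    have hηpos : 0 < η := by
      rcases lt_or_eq_of_le (hh0 θ₀) with h1 | h1
      · exact h1
      · exfalso
        have := hZ θ₀ h1.symm
        have h2 : ε ≤ |g θ₀| := hθ₀K
        rw [this] at h2
        simp at h2
        linarith
    obtain ⟨θ₁, _, hmax⟩ := isCompact_univ.exists_isMaxOn ⟨θ₀, trivial⟩ hg.abs.continuousOn
    set Mg := |g θ₁| with hMg
    have hMg0 : 0 ≤ Mg := abs_nonneg _
    refine ⟨Mg / η, div_nonneg hMg0 hηpos.le, fun θ => ?_⟩
    by_cases hθ : ε ≤ |g θ|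
    · have h1 : η ≤ h θ := hmin hθ
      have h2 : |g θ| ≤ Mg := hmax (Set.mem_univ θ)
      have h3 : Mg = (Mg / η) * η := by field_simp
      calc |g θ| ≤ Mg := h2
        _ = (Mg / η) * η := h3
        _ ≤ (Mg / η) * h θ := by
            exact mul_le_mul_of_nonneg_left h1 (div_nonneg hMg0 hηpos.le)
        _ ≤ ε + (Mg / η) * h θ := le_add_of_nonneg_left hε.le
    · push_neg at hθ
      have : 0 ≤ (Mg / η) * h θ := mul_nonneg (div_nonneg hMg0 hηpos.le) (hh0 θ)
      linarith

lemma key_exists (n : ℕ) (c : Fin (n + 1) → ℂ)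
    (hpsd : (toeplitz n c).PosSemidef) (hsing : (toeplitz n c).det = 0)
    (chat : ℕ → Fin (n + 1) → ℂ)
    (hconv : Tendsto chat atTop (nhds c)) :
    ∃ μstar : MSp, ∀ {ι : Type} (κ : ι → ℕ) (ms : ι → MSp),
      (∀ q (j : Fin (n + 1)), covCoeff (ms q) (j : ℕ) = chat (κ q) j) →
      Tendsto ms (Filter.comap κ atTop) (𝓝 μstar) := by
  classical
  -- kernel vector
  obtain ⟨a, ha0, haker⟩ := (Matrix.exists_mulVec_eq_zero_iff).mpr hsing
  have hQFa : QF n a c = 0 := by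
    rw [QF, haker]
    simp [dotProduct]
  set ee : UnitCirc → ℂ := fun θ => (fourier 1 θ : ℂ) with hee
  -- zero set
  have hpne : pol n a ≠ 0 := pol_ne_zero ha0
  have hfin : {θ : UnitCirc | Pev n a θ = 0}.Finite := by
    have hset : {θ : UnitCirc | Pev n a θ = 0} = ee ⁻¹' {x | (pol n a).IsRoot x} := by
      ext θ
      simp only [Set.mem_setOf_eq, Set.mem_preimage, Polynomial.IsRoot.def, hee]
      rw [pol_eval]
    rw [hset]
    exact (Polynomial.finite_setOf_isRoot hpne).preimage ee_injective.injOn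
  set Zf : Finset UnitCirc := hfin.toFinset with hZf
  have hinj : Set.InjOn ee Zf := ee_injective.injOn
  have hmemZf : ∀ θ : UnitCirc, θ ∈ Zf ↔ Pev n a θ = 0 := by
    intro θ; rw [hZf, Set.Finite.mem_toFinset]; rfl
  -- cardinality bound
  have hcard : Zf.card ≤ n + 1 := by
    have h1 : Zf.card = (Zf.image ee).card := (Finset.card_image_of_injective _ ee_injective).symm
    have h2 : Zf.image ee ⊆ (pol n a).roots.toFinset := by
      intro x hx
      obtain ⟨θ, hθ, rfl⟩ := Finset.mem_image.mp hx
      rw [Multiset.mem_toFinset, Polynomial.mem_roots hpne]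
      rw [Polynomial.IsRoot.def, pol_eval]
      exact (hmemZf θ).mp hθ
    calc Zf.card = (Zf.image ee).card := h1
      _ ≤ (pol n a).roots.toFinset.card := Finset.card_le_card h2
      _ ≤ Multiset.card (pol n a).roots := Multiset.toFinset_card_le _
      _ ≤ (pol n a).natDegree := Polynomial.card_roots' _
      _ ≤ n := pol_natDegree_le n a
      _ ≤ n + 1 := Nat.le_succ n
  -- Lagrange coefficient vectors
  set bvec : UnitCirc → Fin (n + 1) → ℂ :=
    fun i j => (Lagrange.basis Zf ee i).coeff (j : ℕ) with hbvec
  have hdegLag : ∀ i ∈ Zf, (Lagrange.basis Zf ee i).natDegree ≤ n := by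
    intro i hi
    rw [Lagrange.natDegree_basis hinj hi]
    omega
  have hPevb : ∀ i ∈ Zf, ∀ θ : UnitCirc,
      Pev n (bvec i) θ = (Lagrange.basis Zf ee i).eval (ee θ) := by
    intro i hi θ
    rw [eval_eq_Pev n _ (hdegLag i hi) θ]
  -- the interpolation values
  have hRval : ∀ i ∈ Zf, ∀ j ∈ Zf,
      Complex.normSq (Pev n (bvec i) j) = if i = j then 1 else 0 := by
    intro i hi j hj
    rw [hPevb i hi j]
    by_cases hij : i = j
    · subst hij
      rw [Lagrange.eval_basis_self hinj hi]
      simp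
    · rw [Lagrange.eval_basis_of_ne hij hj]
      simp [hij]
  -- weights
  set w : UnitCirc → ℝ := fun i => (((2 * Real.pi : ℝ) : ℂ) * QF n (bvec i) c).re with hwdef
  have hw0 : ∀ i ∈ Zf, 0 ≤ w i := by
    intro i _
    rw [hwdef]
    simp only [Complex.re_ofReal_mul]
    exact mul_nonneg (by positivity) (QF_re_nonneg hpsd _)
  -- the limit measure
  refine ⟨(⟨∑ i ∈ Zf, ENNReal.ofReal (w i) • Measure.dirac i, dirac_sum_finite Zf w⟩ : MSp), ?_⟩
  intro ι κ ms hmem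
  refine MeasureTheory.FiniteMeasure.tendsto_iff_forall_integral_tendsto.mpr ?_
  intro f
  suffices ht : Tendsto (fun q => ∫ x, f x ∂((ms q : Measure UnitCirc)))
      (Filter.comap κ atTop) (𝓝 (∑ i ∈ Zf, w i * f i)) by
    convert ht using 2
    exact integral_dirac_sum Zf w hw0 f f.continuous
  -- basic filter facts
  set 𝔽 : Filter ι := Filter.comap κ atTop with h𝔽
  have hκ : Tendsto κ 𝔽 atTop := tendsto_comap
  have hchat : Tendsto (fun q => chat (κ q)) 𝔽 (𝓝 c) := hconv.comp hκ
  have hcvec : ∀ q, (fun i : Fin (n + 1) => covCoeff (ms q) (i : ℕ)) = chat (κ q) :=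
    fun q => funext fun j => hmem q j
  -- convergence of the R-integrals
  have hRint : ∀ b : Fin (n + 1) → ℂ, ∀ q,
      ∫ θ, Complex.normSq (Pev n b θ) ∂(ms q : Measure UnitCirc)
        = (((2 * Real.pi : ℝ) : ℂ) * QF n b (chat (κ q))).re := by
    intro b q
    rw [qform_real (ms q) n b, hcvec q]
  have hQFtendsto : ∀ b : Fin (n + 1) → ℂ,
      Tendsto (fun q => (((2 * Real.pi : ℝ) : ℂ) * QF n b (chat (κ q))).re) 𝔽
        (𝓝 ((((2 * Real.pi : ℝ) : ℂ) * QF n b c).re)) := by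
    intro b
    exact ((Complex.continuous_re.comp (continuous_const.mul (QF_continuous n b))).tendsto c).comp
      hchat
  -- mass facts
  have hmass : ∀ q, (((ms q : Measure UnitCirc) Set.univ).toReal : ℝ)
      = (((2 * Real.pi : ℝ) : ℂ) * (starRingEnd ℂ) (chat (κ q) 0)).re := by
    intro q
    have h := mass_eq (ms q)
    have h0 : covCoeff (ms q) ((0 : Fin (n + 1)) : ℕ) = chat (κ q) 0 := hmem q 0
    simp only [Fin.val_zero] at h0
    rw [h0] at h
    rw [← Complex.ofReal_re (((ms q : Measure UnitCirc) Set.univ).toReal), h]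
  set M0 : ℝ := (((2 * Real.pi : ℝ) : ℂ) * (starRingEnd ℂ) (c 0)).re with hM0
  have hmass_tendsto : Tendsto (fun q => ((ms q : Measure UnitCirc) Set.univ).toReal) 𝔽 (𝓝 M0) := by
    have hcont0 : Continuous fun c' : Fin (n + 1) → ℂ =>
        (((2 * Real.pi : ℝ) : ℂ) * (starRingEnd ℂ) (c' 0)).re :=
      Complex.continuous_re.comp (continuous_const.mul
        (Complex.continuous_conj.comp (continuous_apply 0)))
    have := (hcont0.tendsto c).comp hchat
    refine this.congr fun q => (hmass q).symm
  -- main estimate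
  rw [Metric.tendsto_nhds]
  intro ε' hε'
  set B : ℝ := |M0| + 1 with hB
  have hBpos : 0 < B := by positivity
  set ε : ℝ := ε' / (4 * B) with hεdef
  have hεpos : 0 < ε := by positivity
  -- the remainder function
  set g : UnitCirc → ℝ := fun θ => f θ - ∑ i ∈ Zf, f i * Complex.normSq (Pev n (bvec i) θ)
    with hgdef
  have hgcont : Continuous g :=
    f.continuous.sub (continuous_finset_sum _ fun i _ =>
      continuous_const.mul (Complex.continuous_normSq.comp (Pev_continuous n (bvec i))))
  set h : UnitCirc → ℝ := fun θ => Complex.normSq (Pev n a θ) with hhdef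
  have hhcont : Continuous h := Complex.continuous_normSq.comp (Pev_continuous n a)
  have hh0 : ∀ θ, 0 ≤ h θ := fun θ => Complex.normSq_nonneg _
  have hgz : ∀ θ, h θ = 0 → g θ = 0 := by
    intro θ hθ
    have hPz : Pev n a θ = 0 := by
      have := Complex.normSq_eq_zero.mp hθ
      exact this
    have hθZf : θ ∈ Zf := (hmemZf θ).mpr hPz
    rw [hgdef]
    simp only
    rw [Finset.sum_eq_single θ]
    · rw [hRval θ hθZf θ hθZf, if_pos rfl, mul_one, sub_self]
    · intro i hi hiθ
      rw [hRval i hi θ hθZf, if_neg hiθ, mul_zero]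
    · intro hθn
      exact absurd hθZf hθn
  obtain ⟨C, hC0, hCb⟩ := bound_aux hgcont hhcont hgz hh0 hεpos
  -- eventual bounds
  have E1 : ∀ᶠ q in 𝔽, |(∑ i ∈ Zf, f i * ∫ θ, Complex.normSq (Pev n (bvec i) θ)
      ∂(ms q : Measure UnitCirc)) - ∑ i ∈ Zf, w i * f i| < ε' / 4 := by
    have ht : Tendsto (fun q => ∑ i ∈ Zf, f i * ∫ θ, Complex.normSq (Pev n (bvec i) θ)
        ∂(ms q : Measure UnitCirc)) 𝔽 (𝓝 (∑ i ∈ Zf, w i * f i)) := by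
      have : ∀ i ∈ Zf, Tendsto (fun q => f i * ∫ θ, Complex.normSq (Pev n (bvec i) θ)
          ∂(ms q : Measure UnitCirc)) 𝔽 (𝓝 (w i * f i)) := by
        intro i _
        have h1 : Tendsto (fun q => ∫ θ, Complex.normSq (Pev n (bvec i) θ)
            ∂(ms q : Measure UnitCirc)) 𝔽 (𝓝 (w i)) := by
          have := hQFtendsto (bvec i)
          refine Tendsto.congr (fun q => (hRint (bvec i) q).symm) ?_
          rw [hwdef]
          exact this
        have := h1.const_mul (f i)
        rw [mul_comm (w i) (f i)]
        exact this
      exact tendsto_finset_sum _ this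
    have := Metric.tendsto_nhds.mp ht (ε' / 4) (by positivity)
    refine this.mono fun q hq => ?_
    rwa [Real.dist_eq] at hq
  have E2 : ∀ᶠ q in 𝔽, C * ∫ θ, h θ ∂(ms q : Measure UnitCirc) < ε' / 4 := by
    have ht : Tendsto (fun q => C * ∫ θ, h θ ∂(ms q : Measure UnitCirc)) 𝔽 (𝓝 0) := by
      have h1 : Tendsto (fun q => ∫ θ, h θ ∂(ms q : Measure UnitCirc)) 𝔽 (𝓝 0) := by
        have := hQFtendsto a
        rw [hQFa, mul_zero, Complex.zero_re] at this
        exact Tendsto.congr (fun q => (hRint a q).symm) this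
      simpa using h1.const_mul C
    have := Metric.tendsto_nhds.mp ht (ε' / 4) (by positivity)
    refine this.mono fun q hq => ?_
    rw [Real.dist_eq, sub_zero] at hq
    exact lt_of_le_of_lt (le_abs_self _) hq
  have E3 : ∀ᶠ q in 𝔽, ((ms q : Measure UnitCirc) Set.univ).toReal < B := by
    refine hmass_tendsto.eventually_lt_const ?_
    rw [hB]
    have : M0 ≤ |M0| := le_abs_self _
    linarith
  filter_upwards [E1, E2, E3] with q hq1 hq2 hq3
  -- decompose the integral
  set μq : Measure UnitCirc := (ms q : Measure UnitCirc) with hμq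
  have hfin' : IsFiniteMeasure μq := (ms q).prop
  have hRint' : ∀ i, Integrable (fun θ => Complex.normSq (Pev n (bvec i) θ)) μq :=
    fun i => cont_integrable (Complex.continuous_normSq.comp (Pev_continuous n (bvec i))) _
  have hsplit : ∫ θ, f θ ∂μq = (∫ θ, g θ ∂μq)
      + ∑ i ∈ Zf, f i * ∫ θ, Complex.normSq (Pev n (bvec i) θ) ∂μq := by
    have h1 : ∀ θ, f θ = g θ + ∑ i ∈ Zf, f i * Complex.normSq (Pev n (bvec i) θ) := by
      intro θ
      rw [hgdef]
      ring
    rw [MeasureTheory.integral_congr_ae (Filter.Eventually.of_forall h1)]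
    rw [MeasureTheory.integral_add (cont_integrable hgcont _)
      (MeasureTheory.integrable_finset_sum _ fun i _ => (hRint' i).const_mul _)]
    congr 1
    rw [MeasureTheory.integral_finset_sum _ fun i _ => (hRint' i).const_mul _]
    exact Finset.sum_congr rfl fun i _ => integral_const_mul _ _
  -- bound ∫ g
  have hgbound : |∫ θ, g θ ∂μq| ≤ ε * (μq Set.univ).toReal + C * ∫ θ, h θ ∂μq := by
    have h1 : |∫ θ, g θ ∂μq| ≤ ∫ θ, |g θ| ∂μq := by
      simpa using MeasureTheory.norm_integral_le_integral_norm (μ := μq) g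
    have h2 : ∫ θ, |g θ| ∂μq ≤ ∫ θ, (ε + C * h θ) ∂μq := by
      refine MeasureTheory.integral_mono (cont_integrable hgcont.abs _)
        (MeasureTheory.Integrable.add (MeasureTheory.integrable_const ε)
          ((cont_integrable hhcont _).const_mul C)) ?_
      intro θ
      exact hCb θ
    have h3 : ∫ θ, (ε + C * h θ) ∂μq = ε * (μq Set.univ).toReal + C * ∫ θ, h θ ∂μq := by
      rw [MeasureTheory.integral_add (MeasureTheory.integrable_const ε)
        ((cont_integrable hhcont _).const_mul C)]
      rw [MeasureTheory.integral_const, integral_const_mul, smul_eq_mul, measureReal_def]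
      ring
    linarith
  -- conclude
  rw [Real.dist_eq, hsplit]
  have hmb : ε * (μq Set.univ).toReal ≤ ε * B := by
    refine mul_le_mul_of_nonneg_left ?_ hεpos.le
    exact le_of_lt hq3
  have hεB : ε * B = ε' / 4 := by
    rw [hεdef]
    field_simp
  have htotal : |(∫ θ, g θ ∂μq)
      + ∑ i ∈ Zf, f i * ∫ θ, Complex.normSq (Pev n (bvec i) θ) ∂μq
      - ∑ i ∈ Zf, w i * f i| ≤ |∫ θ, g θ ∂μq|
      + |(∑ i ∈ Zf, f i * ∫ θ, Complex.normSq (Pev n (bvec i) θ) ∂μq)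
        - ∑ i ∈ Zf, w i * f i| := by
    rw [add_sub_assoc]
    exact abs_add_le _ _
  have := hgbound
  calc |(∫ θ, g θ ∂μq)
      + ∑ i ∈ Zf, f i * ∫ θ, Complex.normSq (Pev n (bvec i) θ) ∂μq
      - ∑ i ∈ Zf, w i * f i| ≤ |∫ θ, g θ ∂μq|
      + |(∑ i ∈ Zf, f i * ∫ θ, Complex.normSq (Pev n (bvec i) θ) ∂μq)
        - ∑ i ∈ Zf, w i * f i| := htotal
    _ < (ε * (μq Set.univ).toReal + C * ∫ θ, h θ ∂μq) + ε' / 4 := by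
        rcases lt_or_ge (|∫ θ, g θ ∂μq|)
          (ε * (μq Set.univ).toReal + C * ∫ θ, h θ ∂μq) with hlt | hle
        · linarith [hq1]
        · linarith [hq1]
    _ < (ε' / 4 + ε' / 4) + ε' / 4 := by
        have : ε * (μq Set.univ).toReal ≤ ε' / 4 := by rw [← hεB]; exact hmb
        linarith [hq2]
    _ < ε' := by linarith

/-- If `c_{0:n}` has a singular positive semidefinite Toeplitz matrix and
`ĉ_{0:n}(k) → c_{0:n}` with all Toeplitz matrices positive semidefinite, then for any weakly
continuous metric `δ`, `ρ_δ(F_{ĉ_{0:n}(k)}) → 0` as `k → ∞`. -/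
theorem stmt2 (n : ℕ) (c : Fin (n + 1) → ℂ) (hreal : (c 0).im = 0)
    (hpsd : (toeplitz n c).PosSemidef) (hsing : (toeplitz n c).det = 0)
    (chat : ℕ → Fin (n + 1) → ℂ)
    (hpsdk : ∀ k, (toeplitz n (chat k)).PosSemidef)
    (hconv : Tendsto chat atTop (nhds c))
    (δ : MSp → MSp → ℝ)
    (hm₀ : ∀ μ0 μ1 : MSp, δ μ0 μ1 = 0 ↔ μ0 = μ1)
    (hm₁ : ∀ μ0 μ1 : MSp, δ μ0 μ1 = δ μ1 μ0)
    (hm₂ : ∀ μ0 μ1 μ2 : MSp, δ μ0 μ2 ≤ δ μ0 μ1 + δ μ1 μ2)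
    (hcont : Continuous (fun p : MSp × MSp => δ p.1 p.2)) :
    Tendsto (fun k => diamE δ (FsetFin n (chat k))) atTop (nhds 0) := by
  obtain ⟨μstar, hkey⟩ := key_exists n c hpsd hsing chat hconv
  rw [ENNReal.tendsto_atTop_zero]
  intro ε hε
  obtain ⟨r, hr0, hrε⟩ : ∃ r : ℝ, 0 < r ∧ ENNReal.ofReal r ≤ ε := by
    rcases eq_or_ne ε ⊤ with h | h
    · exact ⟨1, one_pos, by simp [h]⟩
    · exact ⟨ε.toReal, ENNReal.toReal_pos hε.ne' h, by rw [ENNReal.ofReal_toReal h]⟩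
  have h1 : Tendsto (fun q : {q : ℕ × MSp × MSp //
      q.2.1 ∈ FsetFin n (chat q.1) ∧ q.2.2 ∈ FsetFin n (chat q.1)} => q.val.2.1)
      (Filter.comap (fun q => q.val.1) atTop) (𝓝 μstar) :=
    hkey (fun q : {q : ℕ × MSp × MSp //
      q.2.1 ∈ FsetFin n (chat q.1) ∧ q.2.2 ∈ FsetFin n (chat q.1)} => q.val.1) (fun q => q.val.2.1) (fun q j => q.prop.1 j)
  have h2 : Tendsto (fun q : {q : ℕ × MSp × MSp //
      q.2.1 ∈ FsetFin n (chat q.1) ∧ q.2.2 ∈ FsetFin n (chat q.1)} => q.val.2.2)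
      (Filter.comap (fun q => q.val.1) atTop) (𝓝 μstar) :=
    hkey (fun q : {q : ℕ × MSp × MSp //
      q.2.1 ∈ FsetFin n (chat q.1) ∧ q.2.2 ∈ FsetFin n (chat q.1)} => q.val.1) (fun q => q.val.2.2) (fun q j => q.prop.2 j)
  have hδ : Tendsto (fun q : {q : ℕ × MSp × MSp //
      q.2.1 ∈ FsetFin n (chat q.1) ∧ q.2.2 ∈ FsetFin n (chat q.1)} => δ q.val.2.1 q.val.2.2)
      (Filter.comap (fun q => q.val.1) atTop) (𝓝 0) := by
    have hc := hcont.tendsto (μstar, μstar)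
    rw [(hm₀ μstar μstar).mpr rfl] at hc
    exact hc.comp (h1.prodMk_nhds h2)
  have hev := Metric.tendsto_nhds.mp hδ r hr0
  rw [Filter.eventually_comap] at hev
  rw [Filter.eventually_atTop] at hev
  obtain ⟨N, hN⟩ := hev
  refine ⟨N, fun k hk => ?_⟩
  refine le_trans ?_ hrε
  rw [diamE]
  refine iSup₂_le fun μ0 hμ0 => iSup₂_le fun μ1 hμ1 => ?_
  refine ENNReal.ofReal_le_ofReal ?_
  have hq := hN k hk ⟨(k, μ0, μ1), ⟨hμ0, hμ1⟩⟩ rfl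
  rw [Real.dist_eq, sub_zero] at hq
  exact le_of_lt (lt_of_le_of_lt (le_abs_self _) hq)

end
end

section
/- Let g : 𝕋 → ℝ be a continuous function all of whose Fourier coefficients g_k = (1/2π)∫_{−π}^{π} g(θ) e^{−ikθ} dθ, k ∈ ℤ, are nonzero. Then δ_{smooth,g}(μ0,μ1) := sup_{ξ∈(−π,π]} |∫_{−π}^{π} g(ξ−θ) dμ0(θ) − ∫_{−π}^{π} g(ξ−θ) dμ1(θ)| (the supremum norm of the circular convolution g ∗ (μ0 − μ1)) is a weakly continuous metric on M. -/
open MeasureTheory Complex Filter Topology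
open scoped ENNReal

noncomputable section

/-- The smoothing distance `δ_{smooth,g}(μ0,μ1) = ‖g ∗ (μ0 − μ1)‖_∞`, i.e. the supremum
over `ξ ∈ 𝕋` of `|∫ g(ξ−θ) dμ0(θ) − ∫ g(ξ−θ) dμ1(θ)|`. -/
def deltaSmooth (g : C(UnitCirc, ℝ)) (μ0 μ1 : MSp) : ℝ :=
  ⨆ ξ : UnitCirc, |(∫ θ, g (ξ - θ) ∂(μ0 : Measure UnitCirc))
    - ∫ θ, g (ξ - θ) ∂(μ1 : Measure UnitCirc)|

namespace Stmt4Aux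

lemma cm_integrable {E : Type*} [NormedAddCommGroup E]
    (f : C(UnitCirc, E)) (μ : Measure UnitCirc) [IsFiniteMeasure μ] :
    Integrable f μ :=
  f.continuous.integrable_of_hasCompactSupport (HasCompactSupport.of_compactSpace _)

lemma norm_integral_sub_le {E : Type*} [NormedAddCommGroup E] [NormedSpace ℝ E]
    (μ : Measure UnitCirc) [IsFiniteMeasure μ] (f h : C(UnitCirc, E)) :
    ‖(∫ x, f x ∂μ) - ∫ x, h x ∂μ‖ ≤ dist f h * (μ Set.univ).toReal := by
  rw [← integral_sub (cm_integrable f μ) (cm_integrable h μ)]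
  apply norm_integral_le_of_norm_le_const
  filter_upwards with x
  simpa [dist_eq_norm] using ContinuousMap.dist_apply_le_dist (f := f) (g := h) x

lemma integral_cm_continuous {E : Type*} [NormedAddCommGroup E] [NormedSpace ℝ E]
    (μ : Measure UnitCirc) [IsFiniteMeasure μ] :
    Continuous fun f : C(UnitCirc, E) => ∫ x, f x ∂μ := by
  apply (LipschitzWith.of_dist_le_mul (K := (μ Set.univ).toNNReal) ?_).continuous
  intro f h
  rw [dist_eq_norm]
  calc ‖(∫ x, f x ∂μ) - ∫ x, h x ∂μ‖ ≤ dist f h * (μ Set.univ).toReal :=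
        norm_integral_sub_le μ f h
    _ = ((μ Set.univ).toNNReal : ℝ) * dist f h := by
        simp [ENNReal.toReal, mul_comm]


/-- The family of translates of `g`, as a continuous map. -/
def convK (g : C(UnitCirc, ℝ)) : C(UnitCirc, C(UnitCirc, ℝ)) :=
  ContinuousMap.curry ⟨fun p : UnitCirc × UnitCirc => g (p.1 - p.2),
    g.continuous.comp (continuous_fst.sub continuous_snd)⟩

@[simp] lemma convK_apply (g : C(UnitCirc, ℝ)) (ξ θ : UnitCirc) :
    convK g ξ θ = g (ξ - θ) := rfl

/-- Convolution of `g` with a finite measure, as a continuous function. -/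
def Tmap (g : C(UnitCirc, ℝ)) (μ : MSp) : C(UnitCirc, ℝ) :=
  ⟨fun ξ => ∫ θ, g (ξ - θ) ∂(μ : Measure UnitCirc), by
    have h1 : Continuous fun ξ : UnitCirc =>
        ∫ θ, (convK g ξ) θ ∂(μ : Measure UnitCirc) :=
      (integral_cm_continuous (μ : Measure UnitCirc)).comp (convK g).continuous
    simpa only [convK_apply] using h1⟩

@[simp] lemma Tmap_apply (g : C(UnitCirc, ℝ)) (μ : MSp) (ξ : UnitCirc) :
    Tmap g μ ξ = ∫ θ, g (ξ - θ) ∂(μ : Measure UnitCirc) := rfl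

lemma mass_eq (μ : MSp) : ((μ : Measure UnitCirc) Set.univ).toReal = (μ.mass : ℝ) := by
  rw [← FiniteMeasure.ennreal_mass, ENNReal.coe_toReal]

lemma Tmap_cont (g : C(UnitCirc, ℝ)) : Continuous (Tmap g) := by
  rw [continuous_iff_continuousAt]
  intro μ
  rw [ContinuousAt, Metric.tendsto_nhds]
  intro ε hε
  set C : ℝ := (μ.mass : ℝ) + 1 with hC
  have hC0 : 0 < C := by positivity
  set ε' : ℝ := ε / (2 * C + 2) with hε'
  have hε'0 : 0 < ε' := by positivity
  obtain ⟨t, ht⟩ := (isCompact_range (convK g).continuous).elim_finite_subcover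
      (fun j : UnitCirc => Metric.ball (convK g j) ε') (fun j => Metric.isOpen_ball)
      (by rintro x ⟨ξ, rfl⟩; exact Set.mem_iUnion.mpr ⟨ξ, Metric.mem_ball_self hε'0⟩)
  have ev1 : ∀ᶠ μ' : MSp in 𝓝 μ, ∀ j ∈ t,
      |(∫ θ, (convK g j) θ ∂(μ' : Measure UnitCirc))
        - ∫ θ, (convK g j) θ ∂(μ : Measure UnitCirc)| < ε' := by
    rw [eventually_all_finset]
    intro j _
    have hcont : Continuous fun μ' : MSp =>
        ∫ θ, (convK g j) θ ∂(μ' : Measure UnitCirc) :=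
      FiniteMeasure.continuous_integral_boundedContinuousFunction
        (BoundedContinuousFunction.mkOfCompact (convK g j))
    have := Metric.tendsto_nhds.mp (hcont.tendsto μ) ε' hε'0
    simpa [Real.dist_eq] using this
  have ev2 : ∀ᶠ μ' : MSp in 𝓝 μ, (μ'.mass : ℝ) < C := by
    have hcont : Continuous fun μ' : MSp => (μ'.mass : ℝ) :=
      NNReal.continuous_coe.comp FiniteMeasure.continuous_mass
    exact (hcont.tendsto μ).eventually_lt_const (by simp [hC])
  filter_upwards [ev1, ev2] with μ' h1 h2
  rw [dist_eq_norm]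
  have hmass' : ((μ' : Measure UnitCirc) Set.univ).toReal ≤ C := by
    rw [mass_eq]; exact h2.le
  have hmass : ((μ : Measure UnitCirc) Set.univ).toReal ≤ C := by
    rw [mass_eq, hC]; linarith
  have hb : ‖Tmap g μ' - Tmap g μ‖ ≤ ε' * C + ε' + ε' * C := by
    rw [ContinuousMap.norm_le _ (by positivity)]
    intro ξ
    obtain ⟨j, hjt, hj⟩ : ∃ j ∈ t, dist (convK g ξ) (convK g j) < ε' := by
      have hmem : convK g ξ ∈ ⋃ j ∈ t, Metric.ball (convK g j) ε' :=
        ht (Set.mem_range_self ξ)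
      simpa [Metric.mem_ball] using Set.mem_iUnion₂.mp hmem
    have e1 : ‖(∫ θ, (convK g ξ) θ ∂(μ' : Measure UnitCirc))
        - ∫ θ, (convK g j) θ ∂(μ' : Measure UnitCirc)‖ ≤ ε' * C :=
      le_trans (norm_integral_sub_le _ _ _)
        (mul_le_mul hj.le hmass' ENNReal.toReal_nonneg hε'0.le)
    have e3 : ‖(∫ θ, (convK g j) θ ∂(μ : Measure UnitCirc))
        - ∫ θ, (convK g ξ) θ ∂(μ : Measure UnitCirc)‖ ≤ ε' * C :=
      le_trans (norm_integral_sub_le _ _ _)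
        (mul_le_mul (by rw [dist_comm]; exact hj.le) hmass ENNReal.toReal_nonneg hε'0.le)
    have e2 := (h1 j hjt).le
    have key : (Tmap g μ' - Tmap g μ) ξ
        = ((∫ θ, (convK g ξ) θ ∂(μ' : Measure UnitCirc))
            - ∫ θ, (convK g j) θ ∂(μ' : Measure UnitCirc))
          + ((∫ θ, (convK g j) θ ∂(μ' : Measure UnitCirc))
            - ∫ θ, (convK g j) θ ∂(μ : Measure UnitCirc))
          + ((∫ θ, (convK g j) θ ∂(μ : Measure UnitCirc))
            - ∫ θ, (convK g ξ) θ ∂(μ : Measure UnitCirc)) := by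
      simp only [ContinuousMap.sub_apply, Tmap_apply, convK_apply]
      ring
    rw [key]
    have e2' : ‖(∫ θ, (convK g j) θ ∂(μ' : Measure UnitCirc))
        - ∫ θ, (convK g j) θ ∂(μ : Measure UnitCirc)‖ ≤ ε' := by
      simpa [Real.norm_eq_abs] using e2
    refine le_trans norm_add₃_le ?_
    linarith
  have hfin : ε' * C + ε' + ε' * C < ε := by
    have : ε' * (2 * C + 2) = ε := by
      rw [hε']; field_simp
    nlinarith
  exact lt_of_le_of_lt hb hfin


lemma fourierCoeff_conv (g : C(UnitCirc, ℝ)) (μ : Measure UnitCirc) [IsFiniteMeasure μ]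
    (k : ℤ) :
    fourierCoeff (fun ξ : UnitCirc => ((∫ θ, g (ξ - θ) ∂μ : ℝ) : ℂ)) k
      = fourierCoeff (fun θ : UnitCirc => ((g θ : ℝ) : ℂ)) k * ∫ θ, fourier (-k) θ ∂μ := by
  have hcont : Continuous (Function.uncurry fun ξ θ : UnitCirc =>
      (fourier (-k) ξ : ℂ) * ((g (ξ - θ) : ℝ) : ℂ)) := by
    apply Continuous.mul
    · exact (map_continuous (fourier (-k))).comp continuous_fst
    · exact continuous_ofReal.comp (g.continuous.comp (continuous_fst.sub continuous_snd))
  have hint : Integrable (Function.uncurry fun ξ θ : UnitCirc =>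
      (fourier (-k) ξ : ℂ) * ((g (ξ - θ) : ℝ) : ℂ))
      ((AddCircle.haarAddCircle : Measure UnitCirc).prod μ) :=
    hcont.integrable_of_hasCompactSupport (HasCompactSupport.of_compactSpace _)
  have step1 : fourierCoeff (fun ξ : UnitCirc => ((∫ θ, g (ξ - θ) ∂μ : ℝ) : ℂ)) k
      = ∫ ξ, ∫ θ, (fourier (-k) ξ : ℂ) * ((g (ξ - θ) : ℝ) : ℂ) ∂μ ∂AddCircle.haarAddCircle := by
    unfold fourierCoeff
    congr 1
    ext ξ
    calc (fourier (-k)) ξ • (fun ξ : UnitCirc => ((∫ θ, g (ξ - θ) ∂μ : ℝ) : ℂ)) ξ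
        = (fourier (-k) ξ : ℂ) * ∫ θ, ((g (ξ - θ) : ℝ) : ℂ) ∂μ := by
          simp only [smul_eq_mul]
          exact congrArg (fun z => (fourier (-k) ξ : ℂ) * z)
            (integral_ofReal (f := fun θ => g (ξ - θ))).symm
      _ = ∫ θ, (fourier (-k) ξ : ℂ) * ((g (ξ - θ) : ℝ) : ℂ) ∂μ :=
          (integral_const_mul _ _).symm
  rw [step1, integral_integral_swap hint]
  have inner : ∀ θ : UnitCirc,
      (∫ ξ, (fourier (-k) ξ : ℂ) * ((g (ξ - θ) : ℝ) : ℂ) ∂(AddCircle.haarAddCircle : Measure UnitCirc))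
        = (fourier (-k) θ : ℂ) * fourierCoeff (fun θ : UnitCirc => ((g θ : ℝ) : ℂ)) k := by
    intro θ
    rw [← integral_add_right_eq_self
      (μ := (AddCircle.haarAddCircle : Measure UnitCirc))
      (fun ξ => (fourier (-k) ξ : ℂ) * ((g (ξ - θ) : ℝ) : ℂ)) θ]
    have : ∀ x : UnitCirc, (fourier (-k) (x + θ) : ℂ) * ((g (x + θ - θ) : ℝ) : ℂ)
        = (fourier (-k) θ : ℂ) * ((fourier (-k) x : ℂ) * ((g x : ℝ) : ℂ)) := by
      intro x
      rw [add_sub_cancel_right]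
      simp only [fourier_apply, zsmul_add, AddCircle.toCircle_add, Circle.coe_mul]
      ring
    simp_rw [this]
    rw [integral_const_mul]
    rfl
  simp_rw [inner]
  rw [integral_mul_const, mul_comm]


lemma ext_of_fourier (μ0 μ1 : MSp)
    (h : ∀ n : ℤ, (∫ θ, fourier n θ ∂(μ0 : Measure UnitCirc))
      = ∫ θ, fourier n θ ∂(μ1 : Measure UnitCirc)) : μ0 = μ1 := by
  have key : ∀ f : C(UnitCirc, ℂ),
      (∫ x, f x ∂(μ0 : Measure UnitCirc)) = ∫ x, f x ∂(μ1 : Measure UnitCirc) := by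
    have hS : IsClosed {f : C(UnitCirc, ℂ) |
        (∫ x, f x ∂(μ0 : Measure UnitCirc)) = ∫ x, f x ∂(μ1 : Measure UnitCirc)} :=
      isClosed_eq (integral_cm_continuous _) (integral_cm_continuous _)
    have hspan : (Submodule.span ℂ (Set.range (@fourier (2 * Real.pi))) : Set C(UnitCirc, ℂ))
        ⊆ {f : C(UnitCirc, ℂ) |
          (∫ x, f x ∂(μ0 : Measure UnitCirc)) = ∫ x, f x ∂(μ1 : Measure UnitCirc)} := by
      intro f hf
      induction hf using Submodule.span_induction with
      | mem f hf => obtain ⟨n, rfl⟩ := hf; exact h n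
      | zero => simp
      | add f₁ f₂ _ _ h1 h2 =>
          simp only [Set.mem_setOf_eq, ContinuousMap.coe_add, Pi.add_apply] at *
          rw [integral_add (cm_integrable f₁ _) (cm_integrable f₂ _),
            integral_add (cm_integrable f₁ _) (cm_integrable f₂ _), h1, h2]
      | smul c f _ hf =>
          simp only [Set.mem_setOf_eq, ContinuousMap.coe_smul, Pi.smul_apply] at *
          rw [integral_smul, integral_smul, hf]
    intro f
    have hmem : f ∈ closure ((Submodule.span ℂ (Set.range (@fourier (2 * Real.pi)))
        : Submodule ℂ C(UnitCirc, ℂ)) : Set C(UnitCirc, ℂ)) := by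
      have := span_fourier_closure_eq_top (T := 2 * Real.pi)
      have : f ∈ ((Submodule.span ℂ (Set.range (@fourier (2 * Real.pi)))).topologicalClosure
          : Set C(UnitCirc, ℂ)) := by rw [this]; trivial
      exact this
    exact closure_minimal hspan hS hmem
  apply FiniteMeasure.ext_of_forall_lintegral_eq
  intro f
  have hreal : (∫ x, (f x : ℝ) ∂(μ0 : Measure UnitCirc))
      = ∫ x, (f x : ℝ) ∂(μ1 : Measure UnitCirc) := by
    have hc : Continuous fun x : UnitCirc => ((f x : ℝ) : ℂ) :=
      Complex.continuous_ofReal.comp (NNReal.continuous_coe.comp f.continuous)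
    have := key ⟨fun x => ((f x : ℝ) : ℂ), hc⟩
    simp only [ContinuousMap.coe_mk] at this
    have e0 : (∫ x, ((f x : ℝ) : ℂ) ∂(μ0 : Measure UnitCirc))
        = ((∫ x, (f x : ℝ) ∂(μ0 : Measure UnitCirc) : ℝ) : ℂ) := integral_ofReal
    have e1 : (∫ x, ((f x : ℝ) : ℂ) ∂(μ1 : Measure UnitCirc))
        = ((∫ x, (f x : ℝ) ∂(μ1 : Measure UnitCirc) : ℝ) : ℂ) := integral_ofReal
    rw [e0, e1] at this
    exact_mod_cast this
  have h0 := BoundedContinuousFunction.toReal_lintegral_coe_eq_integral f (μ0 : Measure UnitCirc)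
  have h1 := BoundedContinuousFunction.toReal_lintegral_coe_eq_integral f (μ1 : Measure UnitCirc)
  have fin0 := BoundedContinuousFunction.lintegral_lt_top_of_nnreal (μ0 : Measure UnitCirc) f
  have fin1 := BoundedContinuousFunction.lintegral_lt_top_of_nnreal (μ1 : Measure UnitCirc) f
  exact (ENNReal.toReal_eq_toReal_iff' fin0.ne fin1.ne).mp (by rw [h0, h1]; exact hreal)

lemma Tmap_inj (g : C(UnitCirc, ℝ))
    (hg : ∀ k : ℤ, fourierCoeff (fun θ : UnitCirc => ((g θ : ℝ) : ℂ)) k ≠ 0)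
    {μ0 μ1 : MSp} (h : Tmap g μ0 = Tmap g μ1) : μ0 = μ1 := by
  apply ext_of_fourier
  intro n
  have hfun : (fun ξ : UnitCirc => ((∫ θ, g (ξ - θ) ∂(μ0 : Measure UnitCirc) : ℝ) : ℂ))
      = fun ξ : UnitCirc => ((∫ θ, g (ξ - θ) ∂(μ1 : Measure UnitCirc) : ℝ) : ℂ) := by
    ext ξ
    have := congrArg (fun F : C(UnitCirc, ℝ) => F ξ) h
    simp only [Tmap_apply] at this
    exact_mod_cast congrArg Complex.ofReal this
  have hco := congrArg (fun F => fourierCoeff F (-n)) hfun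
  try simp only at hco
  rw [fourierCoeff_conv g (μ0 : Measure UnitCirc) (-n),
    fourierCoeff_conv g (μ1 : Measure UnitCirc) (-n)] at hco
  simpa [neg_neg] using mul_left_cancel₀ (hg (-n)) hco

end Stmt4Aux

open Stmt4Aux

lemma deltaSmooth_eq_norm (g : C(UnitCirc, ℝ)) (μ0 μ1 : MSp) :
    deltaSmooth g μ0 μ1 = ‖Tmap g μ0 - Tmap g μ1‖ := by
  rw [ContinuousMap.norm_eq_iSup_norm]
  simp only [ContinuousMap.sub_apply, Tmap_apply, Real.norm_eq_abs, deltaSmooth]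

/-- If the continuous windowing function `g` has non-vanishing Fourier
coefficients `g_k = (1/2π)∫ g(θ)e^{−ikθ}dθ`, then `δ_{smooth,g}` is a weakly continuous
metric on `M`. -/
theorem stmt4 (g : C(UnitCirc, ℝ))
    (hg : ∀ k : ℤ, fourierCoeff (fun θ : UnitCirc => ((g θ : ℝ) : ℂ)) k ≠ 0) :
    (∀ μ0 μ1 : MSp, deltaSmooth g μ0 μ1 = 0 ↔ μ0 = μ1) ∧
    (∀ μ0 μ1 : MSp, deltaSmooth g μ0 μ1 = deltaSmooth g μ1 μ0) ∧
    (∀ μ0 μ1 μ2 : MSp, deltaSmooth g μ0 μ2 ≤ deltaSmooth g μ0 μ1 + deltaSmooth g μ1 μ2) ∧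
    Continuous (fun p : MSp × MSp => deltaSmooth g p.1 p.2) := by
  refine ⟨?_, ?_, ?_, ?_⟩
  · intro μ0 μ1
    rw [deltaSmooth_eq_norm]
    constructor
    · intro h
      exact Tmap_inj g hg (sub_eq_zero.mp (norm_eq_zero.mp h))
    · rintro rfl; simp
  · intro μ0 μ1
    rw [deltaSmooth_eq_norm, deltaSmooth_eq_norm, norm_sub_rev]
  · intro μ0 μ1 μ2
    rw [deltaSmooth_eq_norm, deltaSmooth_eq_norm, deltaSmooth_eq_norm]
    simpa [dist_eq_norm] using dist_triangle (Tmap g μ0) (Tmap g μ1) (Tmap g μ2)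
  · have heq : (fun p : MSp × MSp => deltaSmooth g p.1 p.2)
        = fun p : MSp × MSp => ‖Tmap g p.1 - Tmap g p.2‖ :=
      funext fun p => deltaSmooth_eq_norm g p.1 p.2
    rw [heq]
    exact (((Tmap_cont g).comp continuous_fst).sub
      ((Tmap_cont g).comp continuous_snd)).norm

end
end
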